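/- Let (X,e_X,μ_X) and (Y,e_Y,μ_Y) be NP_i-digital H-spaces (i ∈ {1,2}) which are H-equivalent. If (X,e_X,μ_X) is homotopy-associative, then (Y,e_Y,μ_Y) is homotopy-associative. -/

import Mathlib

/-- A digital image: a finite set with a reflexive, symmetric adjacency relation
(a finite reflexive graph). -/
structure DigImage where
  carrier : Type
  [fintype : Fintype carrier]
  adj : carrier → carrier → Prop
  adj_refl : ∀ x, adj x x
  adj_symm : ∀ {x y}, adj x y → adj y x

attribute [instance] DigImage.fintype

/-- `f : (X,κ) → (Y,λ)` is digitally continuous if it preserves adjacency. -/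
def DigContinuous (X Y : DigImage) (f : X.carrier → Y.carrier) : Prop :=
  ∀ ⦃a b : X.carrier⦄, X.adj a b → Y.adj (f a) (f b)

/-- The product of two digital images with the normal product adjacency `NP_i`
(for `i ≤ 1` this is `NP_1`; otherwise `NP_2`): two pairs are adjacent iff
their coordinates are adjacent in at most `i` positions and equal elsewhere. -/
def DigImage.prod (i : ℕ) (X Y : DigImage) : DigImage where
  carrier := X.carrier × Y.carrier
  adj p q :=
    if i ≤ 1 then (p.1 = q.1 ∧ Y.adj p.2 q.2) ∨ (p.2 = q.2 ∧ X.adj p.1 q.1)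
    else X.adj p.1 q.1 ∧ Y.adj p.2 q.2
  adj_refl p := by
    split_ifs
    · exact Or.inl ⟨rfl, Y.adj_refl p.2⟩
    · exact ⟨X.adj_refl p.1, Y.adj_refl p.2⟩
  adj_symm {p q} h := by
    split_ifs at h ⊢ with hi
    · rcases h with ⟨h1, h2⟩ | ⟨h1, h2⟩
      · exact Or.inl ⟨h1.symm, Y.adj_symm h2⟩
      · exact Or.inr ⟨h1.symm, X.adj_symm h2⟩
    · exact ⟨X.adj_symm h.1, Y.adj_symm h.2⟩

/-- The triple product of digital images with the normal product adjacency `NP_i`: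
coordinates adjacent in at most `i` positions and equal in all other positions. -/
def DigImage.prod3 (i : ℕ) (X Y Z : DigImage) : DigImage where
  carrier := X.carrier × Y.carrier × Z.carrier
  adj p q :=
    if i ≤ 1 then
      (p.1 = q.1 ∧ p.2.1 = q.2.1 ∧ Z.adj p.2.2 q.2.2) ∨
      (p.1 = q.1 ∧ p.2.2 = q.2.2 ∧ Y.adj p.2.1 q.2.1) ∨
      (p.2.1 = q.2.1 ∧ p.2.2 = q.2.2 ∧ X.adj p.1 q.1)
    else
      (p.1 = q.1 ∧ Y.adj p.2.1 q.2.1 ∧ Z.adj p.2.2 q.2.2) ∨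
      (p.2.1 = q.2.1 ∧ X.adj p.1 q.1 ∧ Z.adj p.2.2 q.2.2) ∨
      (p.2.2 = q.2.2 ∧ X.adj p.1 q.1 ∧ Y.adj p.2.1 q.2.1)
  adj_refl p := by
    split_ifs
    · exact Or.inl ⟨rfl, rfl, Z.adj_refl p.2.2⟩
    · exact Or.inl ⟨rfl, Y.adj_refl p.2.1, Z.adj_refl p.2.2⟩
  adj_symm {p q} h := by
    split_ifs at h ⊢ with hi
    · rcases h with ⟨h1, h2, h3⟩ | ⟨h1, h2, h3⟩ | ⟨h1, h2, h3⟩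
      · exact Or.inl ⟨h1.symm, h2.symm, Z.adj_symm h3⟩
      · exact Or.inr (Or.inl ⟨h1.symm, h2.symm, Y.adj_symm h3⟩)
      · exact Or.inr (Or.inr ⟨h1.symm, h2.symm, X.adj_symm h3⟩)
    · rcases h with ⟨h1, h2, h3⟩ | ⟨h1, h2, h3⟩ | ⟨h1, h2, h3⟩
      · exact Or.inl ⟨h1.symm, Y.adj_symm h2, Z.adj_symm h3⟩
      · exact Or.inr (Or.inl ⟨h1.symm, X.adj_symm h2, Z.adj_symm h3⟩)
      · exact Or.inr (Or.inr ⟨h1.symm, X.adj_symm h2, Y.adj_symm h3⟩)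

/-- The digital interval `[0,m]_ℤ` with the standard adjacency `|a−b| ≤ 1`. -/
def digInterval (m : ℕ) : DigImage where
  carrier := Fin (m + 1)
  adj a b := |(a : ℤ) - (b : ℤ)| ≤ 1
  adj_refl a := by simp
  adj_symm {a b} h := by
    have h' : |(a : ℤ) - (b : ℤ)| ≤ 1 := h
    rw [abs_sub_comm] at h'
    exact h'

/-- `f` and `g` are `NP_i`-digitally homotopic: there is an
`NP_i`-continuous `H : X × [0,m]_ℤ → Y` with `H(·,0) = f` and `H(·,m) = g`. -/
def DigHomotopic (i : ℕ) (X Y : DigImage) (f g : X.carrier → Y.carrier) : Prop :=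
  ∃ (m : ℕ) (H : X.carrier × Fin (m + 1) → Y.carrier),
    DigContinuous (DigImage.prod i X (digInterval m)) Y H ∧
    (∀ x, H (x, 0) = f x) ∧ (∀ x, H (x, Fin.last m) = g x)

/-- An `NP_i`-digital H-space `(X,e,μ)`. -/
structure IsHSpace (i : ℕ) (X : DigImage) (e : X.carrier)
    (μ : X.carrier × X.carrier → X.carrier) : Prop where
  continuous : DigContinuous (DigImage.prod i X X) X μ
  right_unit : DigHomotopic i X X (fun x => μ (x, e)) id
  left_unit : DigHomotopic i X X (fun x => μ (e, x)) id

/-- H-equivalence of `NP_i`-digital H-spaces. -/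
def HSpaceEquiv (i : ℕ) (X : DigImage) (eX : X.carrier)
    (μX : X.carrier × X.carrier → X.carrier)
    (Y : DigImage) (eY : Y.carrier)
    (μY : Y.carrier × Y.carrier → Y.carrier) : Prop :=
  ∃ (f : X.carrier → Y.carrier) (g : Y.carrier → X.carrier),
    DigContinuous X Y f ∧ DigContinuous Y X g ∧ f eX = eY ∧ g eY = eX ∧
    DigHomotopic i Y Y (f ∘ g) id ∧ DigHomotopic i X X (g ∘ f) id ∧
    DigHomotopic i (DigImage.prod i X X) Y (fun p => f (μX p)) (fun p => μY (f p.1, f p.2)) ∧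
    DigHomotopic i (DigImage.prod i Y Y) X (fun p => g (μY p)) (fun p => μX (g p.1, g p.2))

/-- `NP_i`-homotopy equivalence of digital images. -/
def DigHtpyEquiv (i : ℕ) (X Y : DigImage) : Prop :=
  ∃ (f : X.carrier → Y.carrier) (g : Y.carrier → X.carrier),
    DigContinuous X Y f ∧ DigContinuous Y X g ∧
    DigHomotopic i X X (g ∘ f) id ∧ DigHomotopic i Y Y (f ∘ g) id

/-- A digital image is `NP_i`-irreducible if it is not `NP_i`-homotopy
equivalent to any digital image with fewer points. -/
def DigIrreducible (i : ℕ) (X : DigImage) : Prop :=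
  ¬ ∃ Y : DigImage, Fintype.card Y.carrier < Fintype.card X.carrier ∧ DigHtpyEquiv i X Y

/-- A digital image is connected if any two points are joined by a path
of consecutively adjacent points. -/
def DigConnected (X : DigImage) : Prop :=
  ∀ a b : X.carrier, Relation.ReflTransGen X.adj a b

/-- A digital image is `NP_i`-contractible if the identity is `NP_i`-homotopic
to a constant map. -/
def DigContractible (i : ℕ) (X : DigImage) : Prop :=
  ∃ c : X.carrier, DigHomotopic i X X id (fun _ => c)

/-- An isomorphism of digital images: a continuous bijection with continuous inverse. -/
def IsDigIso (X Y : DigImage) (f : X.carrier → Y.carrier) : Prop :=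
  DigContinuous X Y f ∧ ∃ g : Y.carrier → X.carrier,
    DigContinuous Y X g ∧ Function.LeftInverse g f ∧ Function.RightInverse g f

/-- The sub-digital-image on the points satisfying `P`, with the induced adjacency. -/
noncomputable def subImage (X : DigImage) (P : X.carrier → Prop) : DigImage where
  carrier := {x : X.carrier // P x}
  fintype := Fintype.ofFinite _
  adj a b := X.adj a.1 b.1
  adj_refl a := X.adj_refl a.1
  adj_symm h := X.adj_symm h

/-- The connected component of `e`, as a digital image. -/
noncomputable def componentImage (X : DigImage) (e : X.carrier) : DigImage :=
  subImage X (fun x => Relation.ReflTransGen X.adj e x)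

/-- Homotopy-associativity of an `NP_i`-digital multiplication:
`μ∘(id × μ) ≃ᵢ μ∘(μ × id)` as maps `X × X × X → X` with `NP_i` adjacency. -/
def HomotopyAssociative (i : ℕ) (X : DigImage)
    (μ : X.carrier × X.carrier → X.carrier) : Prop :=
  DigHomotopic i (DigImage.prod3 i X X X) X
    (fun p => μ (p.1, μ (p.2.1, p.2.2)))
    (fun p => μ (μ (p.1, p.2.1), p.2.2))

/-- `α` is a left homotopy-inverse for the H-space `(X,e,μ)`. -/
def LeftHtpyInverse (i : ℕ) (X : DigImage) (e : X.carrier)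
    (μ : X.carrier × X.carrier → X.carrier) (α : X.carrier → X.carrier) : Prop :=
  DigContinuous X X α ∧ DigContinuous X X (fun x => μ (α x, x)) ∧
  DigHomotopic i X X (fun x => μ (α x, x)) (fun _ => e)

/-- `β` is a right homotopy-inverse for the H-space `(X,e,μ)`. -/
def RightHtpyInverse (i : ℕ) (X : DigImage) (e : X.carrier)
    (μ : X.carrier × X.carrier → X.carrier) (β : X.carrier → X.carrier) : Prop :=
  DigContinuous X X β ∧ DigContinuous X X (fun x => μ (x, β x)) ∧
  DigHomotopic i X X (fun x => μ (x, β x)) (fun _ => e)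

namespace DigAux

variable {i : ℕ}

lemma prod_adj_both {X T : DigImage} {p q : X.carrier × T.carrier}
    (h : (DigImage.prod i X T).adj p q) : X.adj p.1 q.1 ∧ T.adj p.2 q.2 := by
  by_cases hi : i ≤ 1
  · simp only [DigImage.prod, if_pos hi] at h
    rcases h with ⟨h1, h2⟩ | ⟨h1, h2⟩
    · refine ⟨?_, h2⟩; rw [h1]; exact X.adj_refl _
    · refine ⟨h2, ?_⟩; rw [h1]; exact T.adj_refl _
  · simpa only [DigImage.prod, if_neg hi] using h

lemma prod_adj_of_eq_fst {X T : DigImage} {p q : X.carrier × T.carrier}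
    (h1 : p.1 = q.1) (h2 : T.adj p.2 q.2) : (DigImage.prod i X T).adj p q := by
  by_cases hi : i ≤ 1
  · simp only [DigImage.prod, if_pos hi]; exact Or.inl ⟨h1, h2⟩
  · simp only [DigImage.prod, if_neg hi]
    refine ⟨?_, h2⟩; rw [h1]; exact X.adj_refl _

lemma prod_adj_of_eq_snd {X T : DigImage} {p q : X.carrier × T.carrier}
    (h1 : X.adj p.1 q.1) (h2 : p.2 = q.2) : (DigImage.prod i X T).adj p q := by
  by_cases hi : i ≤ 1
  · simp only [DigImage.prod, if_pos hi]; exact Or.inr ⟨h2, h1⟩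
  · simp only [DigImage.prod, if_neg hi]
    refine ⟨h1, ?_⟩; rw [h2]; exact T.adj_refl _

lemma prod_adj_of_not_le {X T : DigImage} {p q : X.carrier × T.carrier}
    (hi : ¬ i ≤ 1) (h1 : X.adj p.1 q.1) (h2 : T.adj p.2 q.2) :
    (DigImage.prod i X T).adj p q := by
  simp only [DigImage.prod, if_neg hi]; exact ⟨h1, h2⟩

lemma prod3_adj_all {X Y Z : DigImage} {p q : X.carrier × Y.carrier × Z.carrier}
    (h : (DigImage.prod3 i X Y Z).adj p q) :
    X.adj p.1 q.1 ∧ Y.adj p.2.1 q.2.1 ∧ Z.adj p.2.2 q.2.2 := by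
  by_cases hi : i ≤ 1
  · simp only [DigImage.prod3, if_pos hi] at h
    rcases h with ⟨h1, h2, h3⟩ | ⟨h1, h2, h3⟩ | ⟨h1, h2, h3⟩
    · exact ⟨by rw [h1]; exact X.adj_refl _, by rw [h2]; exact Y.adj_refl _, h3⟩
    · exact ⟨by rw [h1]; exact X.adj_refl _, h3, by rw [h2]; exact Z.adj_refl _⟩
    · exact ⟨h3, by rw [h1]; exact Y.adj_refl _, by rw [h2]; exact Z.adj_refl _⟩
  · simp only [DigImage.prod3, if_neg hi] at h
    rcases h with ⟨h1, h2, h3⟩ | ⟨h1, h2, h3⟩ | ⟨h1, h2, h3⟩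
    · exact ⟨by rw [h1]; exact X.adj_refl _, h2, h3⟩
    · exact ⟨h2, by rw [h1]; exact Y.adj_refl _, h3⟩
    · exact ⟨h2, h3, by rw [h1]; exact Z.adj_refl _⟩

end DigAux
namespace DigAux

lemma interval_adj_iff {m : ℕ} {a b : Fin (m + 1)} :
    (digInterval m).adj a b ↔ |(a : ℤ) - (b : ℤ)| ≤ 1 := Iff.rfl

lemma homotopic_refl {X Y : DigImage} {f : X.carrier → Y.carrier}
    (hf : DigContinuous X Y f) : DigHomotopic i X Y f f :=
  ⟨0, fun p => f p.1, fun _ _ h => hf (prod_adj_both h).1, fun _ => rfl, fun _ => rfl⟩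

lemma homotopic_symm {X Y : DigImage} {f g : X.carrier → Y.carrier}
    (h : DigHomotopic i X Y f g) : DigHomotopic i X Y g f := by
  obtain ⟨m, H, hc, h0, hm⟩ := h
  refine ⟨m, fun p => H (p.1, p.2.rev), ?_, ?_, ?_⟩
  · intro p q hpq
    apply hc
    have hrev : (digInterval m).adj p.2.rev q.2.rev := by
      have h2 := (prod_adj_both hpq).2
      change |((@Fin.val (m + 1) p.2 : ℕ) : ℤ) - ((@Fin.val (m + 1) q.2 : ℕ) : ℤ)| ≤ 1 at h2; show |((m + 1 - (@Fin.val (m + 1) p.2 + 1) : ℕ) : ℤ) - ((m + 1 - (@Fin.val (m + 1) q.2 + 1) : ℕ) : ℤ)| ≤ 1; rw [abs_le] at h2 ⊢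
      have hp := p.2.isLt; have hq := q.2.isLt
      omega
    by_cases hi : i ≤ 1
    · simp only [DigImage.prod, if_pos hi] at hpq ⊢
      rcases hpq with ⟨h1, _⟩ | ⟨h1, h2⟩
      · exact Or.inl ⟨h1, hrev⟩
      · exact Or.inr ⟨by rw [h1], h2⟩
    · simp only [DigImage.prod, if_neg hi] at hpq ⊢
      exact ⟨hpq.1, hrev⟩
  · intro x; simpa only [Fin.rev_zero] using hm x
  · intro x; simpa only [Fin.rev_last] using h0 x

end DigAux
namespace DigAux

lemma homotopic_precomp {A B C : DigImage} {u v : A.carrier → B.carrier}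
    (h : DigHomotopic i A B u v) {φ : C.carrier → A.carrier}
    (hφ : DigContinuous C A φ) :
    DigHomotopic i C B (fun x => u (φ x)) (fun x => v (φ x)) := by
  obtain ⟨m, H, hc, h0, hm⟩ := h
  refine ⟨m, fun p => H (φ p.1, p.2), ?_, fun x => h0 _, fun x => hm _⟩
  intro p q hpq
  apply hc
  by_cases hi : i ≤ 1
  · simp only [DigImage.prod, if_pos hi] at hpq ⊢
    rcases hpq with ⟨h1, h2⟩ | ⟨h1, h2⟩
    · exact Or.inl ⟨by rw [h1], h2⟩
    · exact Or.inr ⟨h1, hφ h2⟩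
  · simp only [DigImage.prod, if_neg hi] at hpq ⊢
    exact ⟨hφ hpq.1, hpq.2⟩

lemma homotopic_postcomp {A B C : DigImage} {u v : A.carrier → B.carrier}
    (h : DigHomotopic i A B u v) {ψ : B.carrier → C.carrier}
    (hψ : DigContinuous B C ψ) :
    DigHomotopic i A C (fun x => ψ (u x)) (fun x => ψ (v x)) := by
  obtain ⟨m, H, hc, h0, hm⟩ := h
  exact ⟨m, fun p => ψ (H p), fun _ _ hpq => hψ (hc hpq), fun x => by show ψ (H (x, 0)) = _; rw [h0],
    fun x => by show ψ (H (x, Fin.last m)) = _; rw [hm]⟩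

lemma homotopic_trans {X Y : DigImage} {f g h : X.carrier → Y.carrier}
    (h1 : DigHomotopic i X Y f g) (h2 : DigHomotopic i X Y g h) :
    DigHomotopic i X Y f h := by
  obtain ⟨m, H1, c1, a0, am⟩ := h1
  obtain ⟨n, H2, c2, b0, bn⟩ := h2
  refine ⟨m + n, fun p =>
    if hp : (Fin.val p.2) ≤ m then H1 (p.1, ⟨p.2, by omega⟩)
    else H2 (p.1, ⟨(Fin.val p.2) - m, by have := p.2.isLt; omega⟩), ?_, ?_, ?_⟩
  · intro p q hpq
    have hX : X.adj p.1 q.1 := (prod_adj_both hpq).1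
    have hT : |((Fin.val p.2) : ℤ) - ((Fin.val q.2) : ℤ)| ≤ 1 := (prod_adj_both hpq).2
    rw [abs_le] at hT
    -- in the i ≤ 1 case, if times differ then the space coords are equal
    have hcase : i ≤ 1 → (Fin.val p.2) ≠ (Fin.val q.2) → p.1 = q.1 := by
      intro hi hne
      simp only [DigImage.prod, if_pos hi] at hpq
      rcases hpq with ⟨h1, _⟩ | ⟨h1, _⟩
      · exact h1
      · exact absurd (congrArg Fin.val h1) hne
    -- helper to build adjacency in a product with an interval
    dsimp only
    by_cases hp : Fin.val p.2 ≤ m <;> by_cases hq : Fin.val q.2 ≤ m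
    all_goals first
      | rw [dif_pos hp, dif_pos hq]
      | rw [dif_pos hp, dif_neg hq]
      | rw [dif_neg hp, dif_pos hq]
      | rw [dif_neg hp, dif_neg hq]
    · -- both in first half
      apply c1
      by_cases hi : i ≤ 1
      · simp only [DigImage.prod, if_pos hi] at hpq ⊢
        rcases hpq with ⟨e1, _⟩ | ⟨e1, e2⟩
        · refine Or.inl ⟨e1, ?_⟩
          rw [interval_adj_iff, abs_le]; constructor <;> simp <;> omega
        · refine Or.inr ⟨?_, e2⟩
          have : (Fin.val p.2) = (Fin.val q.2) := congrArg Fin.val e1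
          exact Fin.ext (by simpa using this)
      · refine prod_adj_of_not_le hi hX ?_
        rw [interval_adj_iff, abs_le]; constructor <;> simp <;> omega
    · -- p in first half, q in second: p.2 = m, q.2 = m+1
      have hpm : (Fin.val p.2) = m := by omega
      have hqm : (Fin.val q.2) = m + 1 := by omega
      have e1 : H1 (p.1, ⟨(Fin.val p.2), by omega⟩) = H2 (p.1, 0) := by
        have : (⟨(Fin.val p.2), by omega⟩ : Fin (m + 1)) = Fin.last m := Fin.ext (by simp [hpm])
        rw [this, am, ← b0]
      rw [e1]
      apply c2
      have hadj : (digInterval n).adj (0 : Fin (n + 1)) (⟨(Fin.val q.2) - m, by have := q.2.isLt; omega⟩ : Fin (n + 1)) := by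
        rw [interval_adj_iff, abs_le]; constructor <;> simp <;> omega
      by_cases hi : i ≤ 1
      · exact prod_adj_of_eq_fst (hcase hi (by omega)) hadj
      · exact prod_adj_of_not_le hi hX hadj
    · -- p in second half, q in first: symmetric
      have hpm : (Fin.val p.2) = m + 1 := by omega
      have hqm : (Fin.val q.2) = m := by omega
      have e1 : H1 (q.1, ⟨(Fin.val q.2), by omega⟩) = H2 (q.1, 0) := by
        have : (⟨(Fin.val q.2), by omega⟩ : Fin (m + 1)) = Fin.last m := Fin.ext (by simp [hqm])
        rw [this, am, ← b0]
      rw [e1]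
      apply c2
      have hadj : (digInterval n).adj
          (⟨(Fin.val p.2) - m, by have := p.2.isLt; omega⟩ : Fin (n + 1)) (0 : Fin (n + 1)) := by
        rw [interval_adj_iff, abs_le]; constructor <;> simp <;> omega
      by_cases hi : i ≤ 1
      · exact prod_adj_of_eq_fst (hcase hi (by omega)) hadj
      · exact prod_adj_of_not_le hi hX hadj
    · -- both in second half
      apply c2
      have hadj : (digInterval n).adj
          (⟨(Fin.val p.2) - m, by have := p.2.isLt; omega⟩ : Fin (n + 1))
          (⟨(Fin.val q.2) - m, by have := q.2.isLt; omega⟩ : Fin (n + 1)) := by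
        rw [interval_adj_iff, abs_le]; constructor <;> simp <;> omega
      by_cases hi : i ≤ 1
      · by_cases hne : (Fin.val p.2) = (Fin.val q.2)
        · exact prod_adj_of_eq_snd hX (Fin.ext (by simp [hne]))
        · exact prod_adj_of_eq_fst (hcase hi hne) hadj
      · exact prod_adj_of_not_le hi hX hadj
  · intro x
    have h0 : ((0 : Fin (m + n + 1)) : ℕ) = 0 := rfl
    simp only [h0, Nat.zero_le, dite_true, dif_pos]
    have : (⟨(0 : ℕ), by omega⟩ : Fin (m + 1)) = 0 := rfl
    rw [this, a0]
  · intro x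
    have hl : ((Fin.last (m + n)) : ℕ) = m + n := rfl
    by_cases hn : n = 0
    · subst hn
      simp only [hl, dif_pos (by omega : m + 0 ≤ m)]
      have e : (⟨m + 0, by omega⟩ : Fin (m + 1)) = Fin.last m := Fin.ext (by simp)
      have e0 : (0 : Fin 1) = Fin.last 0 := rfl
      rw [e, am, ← b0, e0, bn]
    · have hgt : ¬ (m + n ≤ m) := by omega
      simp only [hl, dif_neg hgt]
      have e : (⟨m + n - m, by omega⟩ : Fin (n + 1)) = Fin.last n := Fin.ext (by simp)
      rw [e, bn]

end DigAux
namespace DigAux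

lemma cont_pair_left {Y : DigImage} {μ : Y.carrier × Y.carrier → Y.carrier}
    (hμ : DigContinuous (DigImage.prod i Y Y) Y μ) :
    DigContinuous (DigImage.prod3 i Y Y Y) (DigImage.prod i Y Y)
      (fun p => (p.1, μ (p.2.1, p.2.2))) := by
  intro p q h
  by_cases hi : i ≤ 1
  · simp only [DigImage.prod3, if_pos hi] at h
    rcases h with ⟨h1, h2, h3⟩ | ⟨h1, h2, h3⟩ | ⟨h1, h2, h3⟩
    · exact prod_adj_of_eq_fst h1 (hμ (prod_adj_of_eq_fst h2 h3))
    · exact prod_adj_of_eq_fst h1 (hμ (prod_adj_of_eq_snd h3 h2))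
    · exact prod_adj_of_eq_snd h3 (by dsimp only; rw [h1, h2])
  · obtain ⟨h1, h2, h3⟩ := prod3_adj_all h
    exact prod_adj_of_not_le hi h1 (hμ (prod_adj_of_not_le hi h2 h3))

lemma cont_pair_right {Y : DigImage} {μ : Y.carrier × Y.carrier → Y.carrier}
    (hμ : DigContinuous (DigImage.prod i Y Y) Y μ) :
    DigContinuous (DigImage.prod3 i Y Y Y) (DigImage.prod i Y Y)
      (fun p => (μ (p.1, p.2.1), p.2.2)) := by
  intro p q h
  by_cases hi : i ≤ 1
  · simp only [DigImage.prod3, if_pos hi] at h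
    rcases h with ⟨h1, h2, h3⟩ | ⟨h1, h2, h3⟩ | ⟨h1, h2, h3⟩
    · exact prod_adj_of_eq_fst (by dsimp only; rw [h1, h2]) h3
    · exact prod_adj_of_eq_snd (hμ (prod_adj_of_eq_fst h1 h3)) h2
    · exact prod_adj_of_eq_snd (hμ (prod_adj_of_eq_snd h3 h1)) h2
  · obtain ⟨h1, h2, h3⟩ := prod3_adj_all h
    exact prod_adj_of_not_le hi (hμ (prod_adj_of_not_le hi h1 h2)) h3

lemma cont_map3 {Y X : DigImage} {g : Y.carrier → X.carrier}
    (hg : DigContinuous Y X g) :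
    DigContinuous (DigImage.prod3 i Y Y Y) (DigImage.prod3 i X X X)
      (fun p => (g p.1, g p.2.1, g p.2.2)) := by
  intro p q h
  by_cases hi : i ≤ 1
  · simp only [DigImage.prod3, if_pos hi] at h ⊢
    rcases h with ⟨h1, h2, h3⟩ | ⟨h1, h2, h3⟩ | ⟨h1, h2, h3⟩
    · exact Or.inl ⟨by rw [h1], by rw [h2], hg h3⟩
    · exact Or.inr (Or.inl ⟨by rw [h1], by rw [h2], hg h3⟩)
    · exact Or.inr (Or.inr ⟨by rw [h1], by rw [h2], hg h3⟩)
  · simp only [DigImage.prod3, if_neg hi] at h ⊢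
    rcases h with ⟨h1, h2, h3⟩ | ⟨h1, h2, h3⟩ | ⟨h1, h2, h3⟩
    · exact Or.inl ⟨by rw [h1], hg h2, hg h3⟩
    · exact Or.inr (Or.inl ⟨by rw [h1], hg h2, hg h3⟩)
    · exact Or.inr (Or.inr ⟨by rw [h1], hg h2, hg h3⟩)

/-- Homotopy in the second slot of a binary operation, over a triple product. -/
lemma slot2 {Y X : DigImage} {μ : X.carrier × X.carrier → X.carrier}
    (hμ : DigContinuous (DigImage.prod i X X) X μ)
    {w : Y.carrier → X.carrier} (hw : DigContinuous Y X w)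
    {u v : Y.carrier × Y.carrier → X.carrier}
    (h : DigHomotopic i (DigImage.prod i Y Y) X u v) :
    DigHomotopic i (DigImage.prod3 i Y Y Y) X
      (fun p => μ (w p.1, u (p.2.1, p.2.2)))
      (fun p => μ (w p.1, v (p.2.1, p.2.2))) := by
  obtain ⟨m, H, hc, h0, hm⟩ := h
  refine ⟨m, fun p => μ (w p.1.1, H ((p.1.2.1, p.1.2.2), p.2)), ?_,
    fun x => by obtain ⟨a, b, c⟩ := x; exact congrArg (fun z => μ (w a, z)) (h0 (b, c)),
    fun x => by obtain ⟨a, b, c⟩ := x; exact congrArg (fun z => μ (w a, z)) (hm (b, c))⟩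
  intro p q hpq
  apply hμ
  by_cases hi : i ≤ 1
  · simp only [DigImage.prod, if_pos hi] at hpq
    rcases hpq with ⟨h1, h2⟩ | ⟨h1, h2⟩
    · -- space coords equal, time moves
      refine prod_adj_of_eq_fst (by dsimp only; rw [h1]) ?_
      exact hc (prod_adj_of_eq_fst (by dsimp only; rw [h1]) h2)
    · -- time equal, space moves in prod3
      simp only [DigImage.prod3, if_pos hi] at h2
      rcases h2 with ⟨e1, e2, e3⟩ | ⟨e1, e2, e3⟩ | ⟨e1, e2, e3⟩
      · exact prod_adj_of_eq_fst (by dsimp only; rw [e1]) (hc (prod_adj_of_eq_snd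
          (prod_adj_of_eq_fst e2 e3) h1))
      · exact prod_adj_of_eq_fst (by dsimp only; rw [e1]) (hc (prod_adj_of_eq_snd
          (prod_adj_of_eq_snd e3 e2) h1))
      · exact prod_adj_of_eq_snd (hw e3) (by dsimp only; rw [e1, e2, h1])
  · obtain ⟨hA, hT⟩ := prod_adj_both hpq
    obtain ⟨h1, h2, h3⟩ := prod3_adj_all hA
    exact prod_adj_of_not_le hi (hw h1)
      (hc (prod_adj_of_not_le hi (prod_adj_of_not_le hi h2 h3) hT))

/-- Homotopy in the first slot of a binary operation, over a triple product. -/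
lemma slot1 {Y X : DigImage} {μ : X.carrier × X.carrier → X.carrier}
    (hμ : DigContinuous (DigImage.prod i X X) X μ)
    {w : Y.carrier → X.carrier} (hw : DigContinuous Y X w)
    {u v : Y.carrier × Y.carrier → X.carrier}
    (h : DigHomotopic i (DigImage.prod i Y Y) X u v) :
    DigHomotopic i (DigImage.prod3 i Y Y Y) X
      (fun p => μ (u (p.1, p.2.1), w p.2.2))
      (fun p => μ (v (p.1, p.2.1), w p.2.2)) := by
  obtain ⟨m, H, hc, h0, hm⟩ := h
  refine ⟨m, fun p => μ (H ((p.1.1, p.1.2.1), p.2), w p.1.2.2), ?_,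
    fun x => by obtain ⟨a, b, c⟩ := x; exact congrArg (fun z => μ (z, w c)) (h0 (a, b)),
    fun x => by obtain ⟨a, b, c⟩ := x; exact congrArg (fun z => μ (z, w c)) (hm (a, b))⟩
  intro p q hpq
  apply hμ
  by_cases hi : i ≤ 1
  · simp only [DigImage.prod, if_pos hi] at hpq
    rcases hpq with ⟨h1, h2⟩ | ⟨h1, h2⟩
    · refine prod_adj_of_eq_snd ?_ (by dsimp only; rw [h1])
      exact hc (prod_adj_of_eq_fst (by dsimp only; rw [h1]) h2)
    · simp only [DigImage.prod3, if_pos hi] at h2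
      rcases h2 with ⟨e1, e2, e3⟩ | ⟨e1, e2, e3⟩ | ⟨e1, e2, e3⟩
      · exact prod_adj_of_eq_fst (by dsimp only; rw [e1, e2, h1]) (hw e3)
      · exact prod_adj_of_eq_snd (hc (prod_adj_of_eq_snd
          (prod_adj_of_eq_fst e1 e3) h1)) (by dsimp only; rw [e2])
      · exact prod_adj_of_eq_snd (hc (prod_adj_of_eq_snd
          (prod_adj_of_eq_snd e3 e1) h1)) (by dsimp only; rw [e2])
  · obtain ⟨hA, hT⟩ := prod_adj_both hpq
    obtain ⟨h1, h2, h3⟩ := prod3_adj_all hA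
    exact prod_adj_of_not_le hi
      (hc (prod_adj_of_not_le hi (prod_adj_of_not_le hi h1 h2) hT)) (hw h3)

end DigAux
/-- H-equivalence preserves homotopy-associativity. -/
theorem hequiv_homotopy_associative (i : ℕ) (hi : i = 1 ∨ i = 2)
    (X : DigImage) (eX : X.carrier) (μX : X.carrier × X.carrier → X.carrier)
    (Y : DigImage) (eY : Y.carrier) (μY : Y.carrier × Y.carrier → Y.carrier)
    (hX : IsHSpace i X eX μX) (hY : IsHSpace i Y eY μY)
    (heq : HSpaceEquiv i X eX μX Y eY μY)
    (hassoc : HomotopyAssociative i X μX) :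
    HomotopyAssociative i Y μY := by
  classical
  obtain ⟨f, g, hf, hg, hfe, hge, hfg, hgf, hFμ, hGμ⟩ := heq
  have hμX : DigContinuous (DigImage.prod i X X) X μX := hX.continuous
  have hμY : DigContinuous (DigImage.prod i Y Y) Y μY := hY.continuous
  -- continuity of the assembled maps
  have hφ1 : DigContinuous (DigImage.prod3 i Y Y Y) (DigImage.prod i Y Y)
      (fun p => (p.1, μY (p.2.1, p.2.2))) := DigAux.cont_pair_left hμY
  have hφ2 : DigContinuous (DigImage.prod3 i Y Y Y) (DigImage.prod i Y Y)
      (fun p => (μY (p.1, p.2.1), p.2.2)) := DigAux.cont_pair_right hμY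
  have hL : DigContinuous (DigImage.prod3 i Y Y Y) Y
      (fun p => μY (p.1, μY (p.2.1, p.2.2))) := fun _ _ h => hμY (hφ1 h)
  have hR : DigContinuous (DigImage.prod3 i Y Y Y) Y
      (fun p => μY (μY (p.1, p.2.1), p.2.2)) := fun _ _ h => hμY (hφ2 h)
  have hg3 : DigContinuous (DigImage.prod3 i Y Y Y) (DigImage.prod3 i X X X)
      (fun p => (g p.1, g p.2.1, g p.2.2)) := DigAux.cont_map3 hg
  -- step 1 : μY(1×μY) ≃ fg ∘ μY(1×μY)
  have s1 : DigHomotopic i (DigImage.prod3 i Y Y Y) Y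
      (fun p => μY (p.1, μY (p.2.1, p.2.2)))
      (fun p => f (g (μY (p.1, μY (p.2.1, p.2.2))))) :=
    DigAux.homotopic_symm (DigAux.homotopic_precomp hfg hL)
  -- step 2 : fg ∘ μY(1×μY) ≃ f(μX(g·, g μY(·,·)))
  have s2 : DigHomotopic i (DigImage.prod3 i Y Y Y) Y
      (fun p => f (g (μY (p.1, μY (p.2.1, p.2.2)))))
      (fun p => f (μX (g p.1, g (μY (p.2.1, p.2.2))))) :=
    DigAux.homotopic_postcomp (DigAux.homotopic_precomp hGμ hφ1) hf
  -- step 3 : homotope the inner g∘μY to μX(g×g)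
  have s3 : DigHomotopic i (DigImage.prod3 i Y Y Y) Y
      (fun p => f (μX (g p.1, g (μY (p.2.1, p.2.2)))))
      (fun p => f (μX (g p.1, μX (g p.2.1, g p.2.2)))) :=
    DigAux.homotopic_postcomp (DigAux.slot2 hμX hg hGμ) hf
  -- step 4 : associativity of μX, transported
  have s4 : DigHomotopic i (DigImage.prod3 i Y Y Y) Y
      (fun p => f (μX (g p.1, μX (g p.2.1, g p.2.2))))
      (fun p => f (μX (μX (g p.1, g p.2.1), g p.2.2))) :=
    DigAux.homotopic_postcomp (DigAux.homotopic_precomp hassoc hg3) hf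
  -- step 5 : homotope μX(g×g) back to g∘μY in the first slot
  have s5 : DigHomotopic i (DigImage.prod3 i Y Y Y) Y
      (fun p => f (μX (μX (g p.1, g p.2.1), g p.2.2)))
      (fun p => f (μX (g (μY (p.1, p.2.1)), g p.2.2))) :=
    DigAux.homotopic_postcomp (DigAux.homotopic_symm (DigAux.slot1 hμX hg hGμ)) hf
  -- step 6 : μX(g×g) ≃ g∘μY on the outer pair
  have s6 : DigHomotopic i (DigImage.prod3 i Y Y Y) Y
      (fun p => f (μX (g (μY (p.1, p.2.1)), g p.2.2)))
      (fun p => f (g (μY (μY (p.1, p.2.1), p.2.2)))) :=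
    DigAux.homotopic_postcomp
      (DigAux.homotopic_symm (DigAux.homotopic_precomp hGμ hφ2)) hf
  -- step 7 : fg ∘ μY(μY×1) ≃ μY(μY×1)
  have s7 : DigHomotopic i (DigImage.prod3 i Y Y Y) Y
      (fun p => f (g (μY (μY (p.1, p.2.1), p.2.2))))
      (fun p => μY (μY (p.1, p.2.1), p.2.2)) :=
    DigAux.homotopic_precomp hfg hR
  exact DigAux.homotopic_trans s1 (DigAux.homotopic_trans s2
    (DigAux.homotopic_trans s3 (DigAux.homotopic_trans s4
      (DigAux.homotopic_trans s5 (DigAux.homotopic_trans s6 s7)))))
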